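/- arXiv:1708.02966 — 5 statements merged into one kernel-verified Lean document; each statement's English description precedes it below -/
import Mathlib

section
/- There is a universal constant C > 0 such that the following holds. Let X be a random variable with the binomial distribution Bin(N, α) for some integer N ≥ 1 and α ∈ (0,1), let q ≥ 1, and set B := q/(α·max(N, q)). If B ≥ e then ‖X‖_q ≤ C·q/log B, and if B < e then ‖X‖_q ≤ C·q/B. -/
open MeasureTheory ProbabilityTheory Finset Real

/-- The `q`-th moment norm `(E|Y|^q)^(1/q)` of a real random variable. -/
noncomputable def pnorm {Ω : Type*} [MeasureSpace Ω] (Y : Ω → ℝ) (q : ℝ) : ℝ :=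
  (∫ ω, |Y ω| ^ q) ^ (1 / q)

/-- `X` has the binomial distribution `Bin(N, α)` (as a real-valued random variable). -/
def HasBinomialDist {Ω : Type*} [MeasureSpace Ω] (X : Ω → ℝ) (N : ℕ) (α : ℝ) : Prop :=
  ∀ k : ℕ, ℙ {ω | X ω = (k : ℝ)} =
    ENNReal.ofReal ((N.choose k : ℝ) * α ^ k * (1 - α) ^ (N - k))

lemma nat_rpow_le_exp (q l : ℝ) (hq : 1 ≤ q) (hl : 0 < l) (k : ℕ) :
    (k : ℝ) ^ q ≤ (q / (Real.exp 1 * l)) ^ q * Real.exp (l * k) := by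
  have hq0 : 0 < q := lt_of_lt_of_le one_pos hq
  have hc : 0 < q / (Real.exp 1 * l) := div_pos hq0 (mul_pos (Real.exp_pos 1) hl)
  rcases Nat.eq_zero_or_pos k with hk | hk
  · subst hk
    simp only [Nat.cast_zero, Real.zero_rpow (ne_of_gt hq0)]
    positivity
  · have hk0 : (0:ℝ) < k := by exact_mod_cast hk
    rw [Real.rpow_def_of_pos hk0, Real.rpow_def_of_pos hc, ← Real.exp_add]
    apply Real.exp_le_exp.mpr
    have hx : (0:ℝ) < l * k / q := by positivity
    have h1 : Real.log (l * k / q) ≤ l * k / q - 1 := Real.log_le_sub_one_of_pos hx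
    have h2 : Real.log (l * k / q) = Real.log l + Real.log k - Real.log q := by
      rw [Real.log_div (by positivity) (ne_of_gt hq0),
        Real.log_mul (ne_of_gt hl) (ne_of_gt hk0)]
    have h3 : Real.log (q / (Real.exp 1 * l)) = Real.log q - 1 - Real.log l := by
      rw [Real.log_div (ne_of_gt hq0) (by positivity),
        Real.log_mul (Real.exp_ne_zero 1) (ne_of_gt hl), Real.log_exp]
      ring
    have h4 : Real.log l + Real.log k - Real.log q + 1 ≤ l * k / q := by linarith
    have h5 : (Real.log l + Real.log k - Real.log q + 1) * q ≤ l * k := by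
      rw [← le_div_iff₀ hq0]; exact h4
    rw [h3]
    nlinarith [h5]

lemma moment_aux {Ω : Type} [MeasureSpace Ω] [IsProbabilityMeasure (ℙ : Measure Ω)]
    (N : ℕ) (α : ℝ) (X : Ω → ℝ) (hα0 : 0 < α) (hα1 : α < 1)
    (hmX : Measurable X) (hbin : HasBinomialDist X N α)
    (q l : ℝ) (hq : 1 ≤ q) (hl : 0 < l)
    (hle : α * N * (Real.exp l - 1) ≤ q) :
    pnorm X q ≤ q / l := by
  have hq0 : 0 < q := lt_of_lt_of_le one_pos hq
  set p : ℕ → ℝ := fun k => (N.choose k : ℝ) * α ^ k * (1 - α) ^ (N - k) with hp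
  have hp0 : ∀ k, 0 ≤ p k := by
    intro k
    apply mul_nonneg (mul_nonneg (Nat.cast_nonneg _) (pow_nonneg hα0.le _))
    exact pow_nonneg (by linarith) _
  set A : ℕ → Set Ω := fun k => X ⁻¹' {(k:ℝ)} with hA
  have hAm : ∀ k, MeasurableSet (A k) := fun k => hmX (measurableSet_singleton _)
  have hPA : ∀ k, ℙ (A k) = ENNReal.ofReal (p k) := fun k => hbin k
  have key : ∀ t : ℝ, ∑ k ∈ range (N+1), t ^ k * p k = (α * t + (1 - α)) ^ N := by
    intro t
    rw [add_pow]
    apply Finset.sum_congr rfl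
    intro k _
    simp only [hp, mul_pow]
    ring
  have hsum1 : ∑ k ∈ range (N+1), p k = 1 := by
    have h := key 1
    simp only [one_pow, one_mul] at h
    rw [h]
    norm_num
  set S : Set Ω := ⋃ k ∈ range (N+1), A k with hS
  have hSm : MeasurableSet S :=
    MeasurableSet.biUnion (range (N+1)).countable_toSet (fun k _ => hAm k)
  have hdisj : (↑(range (N+1)) : Set ℕ).PairwiseDisjoint A := by
    intro i _ j _ hij
    simp only [Function.onFun]
    rw [Set.disjoint_left]
    intro ω hi hj
    exact hij (Nat.cast_injective ((hi : X ω = (i:ℝ)).symm.trans (hj : X ω = (j:ℝ))))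
  have hPS : ℙ S = 1 := by
    rw [hS, measure_biUnion_finset hdisj (fun k _ => hAm k)]
    have h : ∑ k ∈ range (N+1), ℙ (A k) = ∑ k ∈ range (N+1), ENNReal.ofReal (p k) :=
      Finset.sum_congr rfl (fun k _ => hPA k)
    rw [h, ← ENNReal.ofReal_sum_of_nonneg (fun k _ => hp0 k), hsum1, ENNReal.ofReal_one]
  have hae : ∀ᵐ ω ∂(ℙ : Measure Ω), ω ∈ S := by
    have h0 : ℙ Sᶜ = 0 := by
      rw [prob_compl_eq_zero_iff hSm]; exact hPS
    filter_upwards [measure_eq_zero_iff_ae_notMem.mp h0] with ω hω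
    simpa using hω
  set c : ℝ := q / (Real.exp 1 * l) with hc
  have hc0 : 0 < c := div_pos hq0 (mul_pos (Real.exp_pos 1) hl)
  have hgh : (fun ω => |X ω| ^ q) =ᵐ[(ℙ : Measure Ω)]
      (fun ω => ∑ k ∈ range (N+1), (A k).indicator (fun _ => (k:ℝ) ^ q) ω) := by
    filter_upwards [hae] with ω hω
    rw [hS] at hω
    simp only [Set.mem_iUnion, exists_prop] at hω
    obtain ⟨k, hk, hXω⟩ := hω
    have hX : X ω = (k:ℝ) := hXω
    rw [Finset.sum_eq_single k]
    · rw [Set.indicator_of_mem hXω, hX, abs_of_nonneg (Nat.cast_nonneg k)]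
    · intro j _ hjk
      apply Set.indicator_of_notMem
      intro hωj
      exact hjk (Nat.cast_injective ((hωj : X ω = (j:ℝ)).symm.trans hX))
    · intro hk'; exact absurd hk hk'
  have hint : ∫ ω, |X ω| ^ q = ∑ k ∈ range (N+1), (k:ℝ) ^ q * p k := by
    rw [integral_congr_ae hgh, integral_finset_sum]
    · apply Finset.sum_congr rfl
      intro k _
      rw [integral_indicator_const _ (hAm k), measureReal_def, hPA k, ENNReal.toReal_ofReal (hp0 k)]
      simp [mul_comm]
    · intro k _
      exact (integrable_const _).indicator (hAm k)
  have hbound : ∫ ω, |X ω| ^ q ≤ (q / l) ^ q := by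
    rw [hint]
    have step1 : ∑ k ∈ range (N+1), (k:ℝ) ^ q * p k ≤
        c ^ q * ∑ k ∈ range (N+1), (Real.exp l) ^ k * p k := by
      rw [Finset.mul_sum]
      apply Finset.sum_le_sum
      intro k _
      have h1 := nat_rpow_le_exp q l hq hl k
      have h2 : Real.exp (l * k) = (Real.exp l) ^ k := by
        rw [← Real.exp_nat_mul]; ring_nf
      calc (k:ℝ) ^ q * p k ≤ (c ^ q * Real.exp (l * k)) * p k :=
            mul_le_mul_of_nonneg_right h1 (hp0 k)
        _ = c ^ q * ((Real.exp l) ^ k * p k) := by rw [h2]; ring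
    have hexp1 : 1 ≤ Real.exp l := by nlinarith [Real.add_one_le_exp l]
    have step3 : (α * Real.exp l + (1 - α)) ^ N ≤ Real.exp q := by
      have h1 : α * Real.exp l + (1 - α) = 1 + α * (Real.exp l - 1) := by ring
      have h2 : 1 + α * (Real.exp l - 1) ≤ Real.exp (α * (Real.exp l - 1)) := by
        have := Real.add_one_le_exp (α * (Real.exp l - 1)); linarith
      have hnn : 0 ≤ α * (Real.exp l - 1) := mul_nonneg hα0.le (by linarith)
      calc (α * Real.exp l + (1 - α)) ^ N
          ≤ (Real.exp (α * (Real.exp l - 1))) ^ N := by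
            apply pow_le_pow_left₀ (by linarith) (by rw [h1]; exact h2)
        _ = Real.exp ((N:ℝ) * (α * (Real.exp l - 1))) := (Real.exp_nat_mul _ N).symm
        _ ≤ Real.exp q := by
            apply Real.exp_le_exp.mpr
            calc (N:ℝ) * (α * (Real.exp l - 1)) = α * N * (Real.exp l - 1) := by ring
              _ ≤ q := hle
    have step4 : c ^ q * Real.exp q = (q / l) ^ q := by
      rw [← Real.exp_one_rpow q, ← Real.mul_rpow hc0.le (Real.exp_pos 1).le]
      congr 1
      rw [hc]
      field_simp
    calc ∑ k ∈ range (N+1), (k:ℝ) ^ q * p k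
        ≤ c ^ q * ∑ k ∈ range (N+1), (Real.exp l) ^ k * p k := step1
      _ = c ^ q * (α * Real.exp l + (1 - α)) ^ N := by rw [key]
      _ ≤ c ^ q * Real.exp q :=
          mul_le_mul_of_nonneg_left step3 (Real.rpow_nonneg hc0.le q)
      _ = (q / l) ^ q := step4
  have hql : 0 ≤ q / l := le_of_lt (div_pos hq0 hl)
  have hI0 : 0 ≤ ∫ ω, |X ω| ^ q :=
    integral_nonneg (fun ω => Real.rpow_nonneg (abs_nonneg _) q)
  simp only [pnorm]
  calc (∫ ω, |X ω| ^ q) ^ (1/q) ≤ ((q / l) ^ q) ^ (1/q) :=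
        Real.rpow_le_rpow hI0 hbound (by positivity)
    _ = q / l := by
        rw [← Real.rpow_mul hql, mul_one_div, div_self (ne_of_gt hq0), Real.rpow_one]

theorem binomial_moment_bound :
    ∃ C : ℝ, 0 < C ∧
      ∀ (Ω : Type) [MeasureSpace Ω] [IsProbabilityMeasure (ℙ : Measure Ω)]
        (N : ℕ) (α : ℝ) (X : Ω → ℝ), 1 ≤ N → α ∈ Set.Ioo (0 : ℝ) 1 →
        Measurable X → HasBinomialDist X N α →
        ∀ q : ℝ, 1 ≤ q →
          (Real.exp 1 ≤ q / (α * max (N : ℝ) q) →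
            pnorm X q ≤ C * q / Real.log (q / (α * max (N : ℝ) q))) ∧
          (q / (α * max (N : ℝ) q) < Real.exp 1 →
            pnorm X q ≤ C * q / (q / (α * max (N : ℝ) q))) := by
  refine ⟨4, by norm_num, ?_⟩
  intro Ω _ _ N α X hN hα hmX hbin q hq
  obtain ⟨hα0, hα1⟩ := hα
  have hq0 : 0 < q := lt_of_lt_of_le one_pos hq
  have hN1 : (1:ℝ) ≤ (N:ℝ) := by exact_mod_cast hN
  set m : ℝ := α * max (N:ℝ) q with hm
  have hm0 : 0 < m := mul_pos hα0 (lt_of_lt_of_le one_pos (le_max_of_le_left hN1))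
  have hNm : α * N ≤ m := mul_le_mul_of_nonneg_left (le_max_left _ _) hα0.le
  set B : ℝ := q / m with hB
  have hB0 : 0 < B := div_pos hq0 hm0
  have hmB : m * B = q := by rw [hB]; field_simp
  constructor
  · intro hBe
    have hlogB : 1 ≤ Real.log B := by
      rw [← Real.log_exp 1]
      exact Real.log_le_log (Real.exp_pos 1) hBe
    have hl : 0 < Real.log B := lt_of_lt_of_le one_pos hlogB
    have hle : α * N * (Real.exp (Real.log B) - 1) ≤ q := by
      rw [Real.exp_log hB0]
      nlinarith [hNm, hB0, hm0, mul_le_mul_of_nonneg_right hNm hB0.le]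
    have hmain := moment_aux N α X hα0 hα1 hmX hbin q (Real.log B) hq hl hle
    calc pnorm X q ≤ q / Real.log B := hmain
      _ ≤ 4 * q / Real.log B := by gcongr; linarith
  · intro hBe
    have h1B : 1 < 1 + B := by linarith
    have hl : 0 < Real.log (1 + B) := Real.log_pos h1B
    have hle : α * N * (Real.exp (Real.log (1 + B)) - 1) ≤ q := by
      rw [Real.exp_log (by linarith)]
      have h : α * N * ((1 + B) - 1) = α * N * B := by ring
      rw [h]
      calc α * N * B ≤ m * B := mul_le_mul_of_nonneg_right hNm hB0.le
        _ = q := hmB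
    have hmain := moment_aux N α X hα0 hα1 hmX hbin q (Real.log (1 + B)) hq hl hle
    have hlog : B / (1 + B) ≤ Real.log (1 + B) := by
      have h := Real.log_le_sub_one_of_pos (show (0:ℝ) < 1/(1+B) by positivity)
      rw [Real.log_div one_ne_zero (by linarith : (1:ℝ) + B ≠ 0), Real.log_one] at h
      have heq : 1/(1+B) - 1 = -(B/(1+B)) := by field_simp; ring
      linarith [heq ▸ h]
    have he3 : Real.exp 1 < 3 := by
      have := Real.exp_one_lt_d9; linarith
    have hB4 : B ≤ 4 * Real.log (1 + B) := by
      have h14 : 1 + B ≤ 4 := by linarith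
      have : B / 4 ≤ B / (1 + B) := by
        apply div_le_div_of_nonneg_left hB0.le (by linarith) h14
      linarith
    calc pnorm X q ≤ q / Real.log (1 + B) := hmain
      _ ≤ 4 * q / B := by
          rw [div_le_div_iff₀ hl hB0]
          nlinarith [hq0, hB4, hl]
end

section
/- Let q ≥ 1 be a real number and let X_1, …, X_n be independent random variables with E|X_i|^q < ∞ for each i, such that for every T > 0, ‖∑_{i=1}^n X_i/T‖_q^q ≤ ∏_{i=1}^n φ_q(X_i/T). Then there is a universal constant C > 0 such that ‖∑_{i=1}^n X_i‖_q ≤ C·inf{ T > 0 : ∑_{i=1}^n log E[|1 + X_i/T|^q] ≤ q }. -/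
open MeasureTheory ProbabilityTheory Finset Real

lemma aux_bound {q x c : ℝ} (hq : 1 ≤ q) (hc : 1 ≤ c) :
    |1 + x / c| ^ q ≤ 2 ^ q * (1 + |x| ^ q) := by
  have hq0 : (0:ℝ) ≤ q := le_trans zero_le_one hq
  have hc0 : (0:ℝ) < c := lt_of_lt_of_le one_pos hc
  have h1 : |1 + x / c| ≤ 1 + |x| := by
    calc |1 + x / c| ≤ |(1:ℝ)| + |x / c| := abs_add_le _ _
    _ ≤ 1 + |x| := by
        rw [abs_one, abs_div, abs_of_pos hc0]
        have : |x| / c ≤ |x| := by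
          rw [div_le_iff₀ hc0]
          nlinarith [abs_nonneg x]
        linarith
  have h2 : |1 + x / c| ^ q ≤ (1 + |x|) ^ q :=
    Real.rpow_le_rpow (abs_nonneg _) h1 hq0
  have h3 : (1 + |x|) ≤ 2 * max 1 |x| := by
    have := le_max_left (1:ℝ) |x|
    have := le_max_right (1:ℝ) |x|
    linarith
  have h4 : (1 + |x|) ^ q ≤ (2 * max 1 |x|) ^ q :=
    Real.rpow_le_rpow (by positivity) h3 hq0
  have h5 : (2 * max 1 |x|) ^ q = 2 ^ q * (max 1 |x|) ^ q :=
    Real.mul_rpow (by norm_num) (le_max_of_le_left zero_le_one)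
  have h6 : (max 1 |x|) ^ q ≤ 1 + |x| ^ q := by
    rcases le_total |x| 1 with h | h
    · rw [max_eq_left h, Real.one_rpow]
      have : (0:ℝ) ≤ |x| ^ q := Real.rpow_nonneg (abs_nonneg _) _
      linarith
    · rw [max_eq_right h]
      linarith
  calc |1 + x / c| ^ q ≤ (2 * max 1 |x|) ^ q := le_trans h2 h4
  _ = 2 ^ q * (max 1 |x|) ^ q := h5
  _ ≤ 2 ^ q * (1 + |x| ^ q) := by
      have : (0:ℝ) ≤ 2 ^ q := Real.rpow_nonneg (by norm_num) _
      nlinarith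

theorem latala_upper_bound_from_phi :
    ∃ C : ℝ, 0 < C ∧
      ∀ (Ω : Type) [MeasureSpace Ω] [IsProbabilityMeasure (ℙ : Measure Ω)]
        (n : ℕ) (X : Fin n → Ω → ℝ), (∀ i, Measurable (X i)) →
        iIndepFun X ℙ →
        ∀ q : ℝ, 1 ≤ q → (∀ i, Integrable (fun ω => |X i ω| ^ q)) →
        (∀ T : ℝ, 0 < T →
          (pnorm (fun ω => ∑ i, X i ω / T) q) ^ q ≤ ∏ i, ∫ ω, |1 + X i ω / T| ^ q) →
        pnorm (fun ω => ∑ i, X i ω) q ≤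
          C * sInf {T : ℝ | 0 < T ∧ ∑ i, Real.log (∫ ω, |1 + X i ω / T| ^ q) ≤ q} := by
  refine ⟨Real.exp 1, Real.exp_pos 1, ?_⟩
  intro Ω _ _ n X hX _hind q hq hint h
  have hq0 : (0:ℝ) < q := lt_of_lt_of_le one_pos hq
  set S := {T : ℝ | 0 < T ∧ ∑ i, Real.log (∫ ω, |1 + X i ω / T| ^ q) ≤ q} with hS
  set P := pnorm (fun ω => ∑ i, X i ω) q with hP
  have hPnn : 0 ≤ P := Real.rpow_nonneg (integral_nonneg fun ω => Real.rpow_nonneg (abs_nonneg _) _) _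
  -- S is nonempty
  have hSne : S.Nonempty := by
    have tendI : ∀ i : Fin n, Filter.Tendsto
        (fun k : ℕ => ∫ ω, |1 + X i ω / ((k:ℝ) + 1)| ^ q) Filter.atTop (nhds 1) := by
      intro i
      have cont : Continuous fun t : ℝ => |1 + t| ^ q :=
        ((continuous_const.add continuous_id).abs).rpow_const fun x => Or.inr hq0.le
      have key := MeasureTheory.tendsto_integral_of_dominated_convergence
        (F := fun (k:ℕ) ω => |1 + X i ω / ((k:ℝ) + 1)| ^ q)
        (f := fun _ => (1:ℝ)) (μ := (ℙ : Measure Ω))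
        (bound := fun ω => 2 ^ q * (1 + |X i ω| ^ q))
        (fun k => (cont.measurable.comp ((hX i).div_const _)).aestronglyMeasurable)
        (((integrable_const (1:ℝ)).add (hint i)).const_mul _)
        (fun k => Filter.Eventually.of_forall fun ω => by
          rw [Real.norm_eq_abs, abs_of_nonneg (Real.rpow_nonneg (abs_nonneg _) _)]
          exact aux_bound hq (by have := (Nat.cast_nonneg k : (0:ℝ) ≤ k); linarith))
        (Filter.Eventually.of_forall fun ω => by
          have h1 : Filter.Tendsto (fun k : ℕ => X i ω / ((k:ℝ) + 1)) Filter.atTop (nhds 0) := by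
            have := (tendsto_const_div_atTop_nhds_zero_nat (X i ω)).comp
              (Filter.tendsto_add_atTop_nat 1)
            refine this.congr fun a => ?_
            simp only [Function.comp]
            push_cast
            ring
          have := (cont.tendsto 0).comp h1
          simpa [Function.comp_def] using this)
      simpa using key
    have tendL : Filter.Tendsto
        (fun k : ℕ => ∑ i, Real.log (∫ ω, |1 + X i ω / ((k:ℝ) + 1)| ^ q))
        Filter.atTop (nhds 0) := by
      have : Filter.Tendsto (fun k : ℕ => ∑ i : Fin n,
          Real.log (∫ ω, |1 + X i ω / ((k:ℝ) + 1)| ^ q)) Filter.atTop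
          (nhds (∑ _i : Fin n, Real.log 1)) := by
        refine tendsto_finset_sum _ fun i _ => ?_
        exact ((Real.continuousAt_log one_ne_zero).tendsto.comp (tendI i))
      simpa using this
    obtain ⟨k, hk⟩ := (tendL.eventually_lt_const hq0).exists
    exact ⟨(k:ℝ) + 1, by positivity, hk.le⟩
  -- key bound for each T ∈ S
  have key : ∀ T ∈ S, P ≤ Real.exp 1 * T := by
    rintro T ⟨hT, hTlog⟩
    have hscale : pnorm (fun ω => ∑ i, X i ω / T) q = P / T := by
      rw [hP]
      unfold pnorm
      have hptw : ∀ ω, |∑ i, X i ω / T| ^ q = |∑ i, X i ω| ^ q / T ^ q := by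
        intro ω
        rw [← Finset.sum_div, abs_div, abs_of_pos hT,
          Real.div_rpow (abs_nonneg _) hT.le]
      simp_rw [hptw]
      rw [integral_div, Real.div_rpow
        (integral_nonneg fun ω => Real.rpow_nonneg (abs_nonneg _) _)
        (Real.rpow_nonneg hT.le _), ← Real.rpow_mul hT.le,
        mul_one_div_cancel hq0.ne', Real.rpow_one]
    have hprod : (∏ i, ∫ ω, |1 + X i ω / T| ^ q) ≤ Real.exp q := by
      calc (∏ i, ∫ ω, |1 + X i ω / T| ^ q)
          ≤ ∏ i, Real.exp (Real.log (∫ ω, |1 + X i ω / T| ^ q)) :=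
            Finset.prod_le_prod
              (fun i _ => integral_nonneg fun ω => Real.rpow_nonneg (abs_nonneg _) _)
              (fun i _ => Real.le_exp_log _)
        _ = Real.exp (∑ i, Real.log (∫ ω, |1 + X i ω / T| ^ q)) := (Real.exp_sum _ _).symm
        _ ≤ Real.exp q := Real.exp_le_exp.mpr hTlog
    have hle : (P / T) ^ q ≤ Real.exp q := by
      rw [← hscale]; exact le_trans (h T hT) hprod
    have hPT : P / T ≤ Real.exp 1 := by
      have hPTnn : 0 ≤ P / T := div_nonneg hPnn hT.le
      have := Real.rpow_le_rpow (Real.rpow_nonneg hPTnn _) hle (one_div_nonneg.mpr hq0.le)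
      rwa [← Real.rpow_mul hPTnn, mul_one_div_cancel hq0.ne', Real.rpow_one,
        ← Real.exp_one_rpow q, ← Real.rpow_mul (Real.exp_pos 1).le,
        mul_one_div_cancel hq0.ne', Real.rpow_one] at this
    calc P = (P / T) * T := by field_simp
    _ ≤ Real.exp 1 * T := by nlinarith
  have : P / Real.exp 1 ≤ sInf S := by
    refine le_csInf hSne fun T hT => ?_
    rw [div_le_iff₀ (Real.exp_pos 1)]
    nlinarith [key T hT, (hS ▸ hT : T ∈ S).1]
  calc P = (P / Real.exp 1) * Real.exp 1 := by field_simp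
  _ ≤ sInf S * Real.exp 1 := by nlinarith [Real.exp_pos 1]
  _ = Real.exp 1 * sInf S := mul_comm _ _
end

section
/- Let q ≥ 2 be a real number and let Y_1, …, Y_n be independent symmetric random variables with E|Y_i|^q < ∞ for each i. Then φ_q(∑_{i=1}^n Y_i) ≤ ∏_{i=1}^n φ_q(Y_i). -/
open MeasureTheory ProbabilityTheory Finset Real

section Scalar

variable {q : ℝ}

/-- Spread lemma: for a convex function, moving two points with fixed sum closer
together decreases the sum of values. -/
private lemma spread_lemma {S : Set ℝ} {f : ℝ → ℝ} (hf : ConvexOn ℝ S f) {a b a' b' : ℝ}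
    (ha : a ∈ S) (hb : b ∈ S) (h1 : a ≤ a') (h2 : a' ≤ b) (h3 : a ≤ b')
    (hsum : a' + b' = a + b) : f a' + f b' ≤ f a + f b := by
  rcases eq_or_lt_of_le (h1.trans h2) with h | hab
  · have haa : a' = a := le_antisymm (h ▸ h2) h1
    have hbb : b' = b := by linarith
    simp [haa, hbb]
  · set lam : ℝ := (a' - a) / (b - a) with hlam
    have hba : 0 < b - a := by linarith
    have h0 : 0 ≤ lam := div_nonneg (by linarith) hba.le
    have h0' : 0 ≤ 1 - lam := by
      have : lam ≤ 1 := (div_le_one hba).2 (by linarith)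
      linarith
    have hcancel : lam * (b - a) = a' - a := div_mul_cancel₀ _ (ne_of_gt hba)
    have e1 : (1 - lam) • a + lam • b = a' := by
      simp only [smul_eq_mul]
      nlinarith [hcancel]
    have e2 : lam • a + (1 - lam) • b = b' := by
      simp only [smul_eq_mul]
      nlinarith [hcancel]
    have i1 := hf.2 ha hb h0' h0 (by ring)
    have i2 := hf.2 ha hb h0 h0' (by ring)
    rw [e1] at i1
    rw [e2] at i2
    simp only [smul_eq_mul] at i1 i2
    nlinarith

private lemma psi_zero {ψ : ℝ → ℝ} (hodd : ∀ u, ψ (-u) = -ψ u) : ψ 0 = 0 := by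
  have := hodd 0
  rw [neg_zero] at this
  linarith

/-- Increment comparison for odd functions convex on `[0,∞)`. -/
private lemma lemB {ψ : ℝ → ℝ} (hodd : ∀ u, ψ (-u) = -ψ u) (hmono : Monotone ψ)
    (hconv : ConvexOn ℝ (Set.Ici 0) ψ) {p r L : ℝ} (hL : 0 ≤ L) (hpr : |p| ≤ r) :
    ψ (p + L) - ψ p ≤ ψ (r + L) - ψ r := by
  have hr : 0 ≤ r := (abs_nonneg p).trans hpr
  have hpler : p ≤ r := (le_abs_self p).trans hpr
  have hnp : -r ≤ p := by
    have := neg_abs_le p; linarith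
  have hψ0 : ψ 0 = 0 := psi_zero hodd
  have B1 : ∀ a b : ℝ, 0 ≤ a → a ≤ b → ψ (a + L) - ψ a ≤ ψ (b + L) - ψ b := by
    intro a b ha hab
    have := spread_lemma hconv (a := a) (b := b + L) (a' := a + L) (b' := b)
      (Set.mem_Ici.2 ha) (Set.mem_Ici.2 (by linarith)) (by linarith) (by linarith)
      (by linarith) (by ring)
    linarith
  rcases le_or_gt 0 p with hp | hp
  · exact B1 p r hp hpler
  rcases le_or_gt (p + L) 0 with hpL | hpL
  · have e1 : ψ (p + L) = -ψ (-p - L) := by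
      rw [show (-p - L : ℝ) = -(p + L) by ring, hodd]; ring
    have e2 : ψ p = -ψ (-p) := by rw [← hodd, neg_neg]
    have := B1 (-p - L) r (by linarith) (by linarith)
    rw [show (-p - L + L : ℝ) = -p by ring] at this
    linarith
  · -- p < 0 < p + L
    have hsup := spread_lemma hconv (a := 0) (b := L) (a' := p + L) (b' := -p)
      (Set.mem_Ici.2 le_rfl) (Set.mem_Ici.2 hL) hpL.le (by linarith) (by linarith) (by ring)
    have e2 : ψ p = -ψ (-p) := by rw [← hodd, neg_neg]
    have := B1 0 r le_rfl hr
    rw [zero_add] at this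
    linarith

/-- The odd "derivative" function `w ↦ |w| ^ (q-2) * w`. -/
private noncomputable def sg (q : ℝ) (w : ℝ) : ℝ := |w| ^ (q - 2) * w

private lemma sg_of_nonneg (hq : 2 ≤ q) {w : ℝ} (hw : 0 ≤ w) : sg q w = w ^ (q - 1) := by
  rcases eq_or_lt_of_le hw with h | h
  · simp [sg, ← h, Real.zero_rpow (by linarith : q - 1 ≠ 0)]
  · rw [sg, abs_of_pos h]
    nth_rewrite 2 [show w = w ^ (1:ℝ) from (Real.rpow_one w).symm]
    rw [← Real.rpow_add h, show (q - 2 + 1 : ℝ) = q - 1 by ring]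

private lemma sg_neg' (q : ℝ) (w : ℝ) : sg q (-w) = -sg q w := by
  simp [sg, abs_neg]

private lemma sg_of_nonpos (hq : 2 ≤ q) {w : ℝ} (hw : w ≤ 0) : sg q w = -((-w) ^ (q - 1)) := by
  have : sg q (-(-w)) = -sg q (-w) := sg_neg' q (-w)
  rw [neg_neg] at this
  rw [this, sg_of_nonneg hq (by linarith)]

private lemma sg_mono (hq : 2 ≤ q) : Monotone (sg q) := by
  intro a b hab
  rcases le_or_gt 0 a with ha | ha
  · rw [sg_of_nonneg hq ha, sg_of_nonneg hq (ha.trans hab)]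
    exact Real.rpow_le_rpow ha hab (by linarith)
  rcases le_or_gt b 0 with hb | hb
  · rw [sg_of_nonpos hq ha.le, sg_of_nonpos hq hb]
    have := Real.rpow_le_rpow (by linarith : (0:ℝ) ≤ -b) (by linarith : -b ≤ -a) (by linarith : 0 ≤ q - 1)
    linarith
  · rw [sg_of_nonpos hq ha.le, sg_of_nonneg hq hb.le]
    have h1 : (0:ℝ) ≤ (-a) ^ (q - 1) := Real.rpow_nonneg (by linarith) _
    have h2 : (0:ℝ) ≤ b ^ (q - 1) := Real.rpow_nonneg hb.le _
    linarith

private lemma sg_convex (hq : 2 ≤ q) : ConvexOn ℝ (Set.Ici 0) (sg q) :=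
  (convexOn_rpow (by linarith : 1 ≤ q - 1)).congr fun w hw => (sg_of_nonneg hq hw).symm

private lemma hasDerivAt_Phi (hq : 2 ≤ q) (e : ℝ) (u : ℝ) :
    HasDerivAt (fun u : ℝ => |u + e| ^ q - |u - e| ^ q)
      (q * sg q (u + e) - q * sg q (u - e)) u := by
  have hq1 : (1:ℝ) < q := by linarith
  have h1 : HasDerivAt (fun u : ℝ => |u + e| ^ q) (q * sg q (u + e)) u := by
    have := (hasDerivAt_abs_rpow (u + e) hq1).comp u ((hasDerivAt_id u).add_const e)
    simpa [sg, mul_assoc, Function.comp_def] using this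
  have h2 : HasDerivAt (fun u : ℝ => |u - e| ^ q) (q * sg q (u - e)) u := by
    have := (hasDerivAt_abs_rpow (u - e) hq1).comp u ((hasDerivAt_id u).sub_const e)
    simpa [sg, mul_assoc, Function.comp_def] using this
  exact h1.sub h2

private lemma abs_rpow_convex (hq : 2 ≤ q) : ConvexOn ℝ Set.univ (fun u : ℝ => |u| ^ q) := by
  have habs : ConvexOn ℝ Set.univ (fun u : ℝ => |u|) := by
    exact (convexOn_univ_norm (E := ℝ)).congr (fun u _ => Real.norm_eq_abs u)
  have himg_eq : (fun u : ℝ => |u|) '' Set.univ = Set.Ici 0 := by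
    apply Set.eq_of_subset_of_subset
    · rintro x ⟨u, -, rfl⟩; exact abs_nonneg u
    · intro x hx; exact ⟨x, trivial, abs_of_nonneg hx⟩
  have hg : ConvexOn ℝ ((fun u : ℝ => |u|) '' Set.univ) (fun x : ℝ => x ^ q) := by
    rw [himg_eq]; exact convexOn_rpow (by linarith)
  have hmono : MonotoneOn (fun x : ℝ => x ^ q) ((fun u : ℝ => |u|) '' Set.univ) := by
    rw [himg_eq]; exact fun a ha b _ hab => Real.rpow_le_rpow ha hab (by linarith)
  exact hg.comp habs hmono

private lemma Phi_mono (hq : 2 ≤ q) {e : ℝ} (he : 0 ≤ e) :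
    Monotone (fun u : ℝ => |u + e| ^ q - |u - e| ^ q) := by
  intro u v huv
  have := spread_lemma (abs_rpow_convex hq) (a := u - e) (b := v + e) (a' := u + e)
    (b' := v - e) trivial trivial (by linarith) (by linarith) (by linarith) (by ring)
  simp only
  linarith

private lemma Phi_odd (q : ℝ) (e : ℝ) (u : ℝ) :
    |(-u) + e| ^ q - |(-u) - e| ^ q = -(|u + e| ^ q - |u - e| ^ q) := by
  rw [show (-u + e : ℝ) = -(u - e) by ring, show (-u - e : ℝ) = -(u + e) by ring,
    abs_neg, abs_neg]
  ring

private lemma Phi_convex (hq : 2 ≤ q) {e : ℝ} (he : 0 ≤ e) :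
    ConvexOn ℝ (Set.Ici 0) (fun u : ℝ => |u + e| ^ q - |u - e| ^ q) := by
  have hdiff : Differentiable ℝ (fun u : ℝ => |u + e| ^ q - |u - e| ^ q) :=
    fun u => (hasDerivAt_Phi hq e u).differentiableAt
  apply MonotoneOn.convexOn_of_deriv (convex_Ici 0) hdiff.continuous.continuousOn
    hdiff.differentiableOn
  rw [interior_Ici]
  intro a ha b hb hab
  rw [(hasDerivAt_Phi hq e a).deriv, (hasDerivAt_Phi hq e b).deriv]
  have hqpos : (0:ℝ) ≤ q := by linarith
  have ha' : (0:ℝ) < a := ha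
  have hB := lemB (sg_neg' q) (sg_mono hq) (sg_convex hq) (p := a - e) (r := a + e)
    (L := b - a) (by linarith) (abs_le.2 ⟨by linarith, by linarith⟩)
  rw [show (a - e + (b - a) : ℝ) = b - e by ring, show (a + e + (b - a) : ℝ) = b + e by ring] at hB
  nlinarith [hB]

/-- Core scalar inequality assuming `0 ≤ y ≤ x`. -/
private lemma lemA_core (hq : 2 ≤ q) {x y : ℝ} (hy : 0 ≤ y) (hxy : y ≤ x) :
    |1+x+y| ^ q + |1-x-y| ^ q + |1+x-y| ^ q + |1-x+y| ^ q ≤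
      (|1+x| ^ q + |1-x| ^ q) * (|1+y| ^ q + |1-y| ^ q) := by
  have hx : 0 ≤ x := hy.trans hxy
  set e : ℝ := x * y / 2 with he'
  have he : 0 ≤ e := by positivity
  set Φ : ℝ → ℝ := fun u => |u + e| ^ q - |u - e| ^ q with hΦ
  have hmono : Monotone Φ := Phi_mono hq he
  have hodd : ∀ u, Φ (-u) = -Φ u := fun u => Phi_odd q e u
  have hconv : ConvexOn ℝ (Set.Ici 0) Φ := Phi_convex hq he
  have main : Φ (1+x-y-e) + Φ (x+y-1-e) ≤ Φ (1+x+y+e) + Φ (x-y-1+e) := by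
    rcases le_or_gt (2*y) (2*e) with h1 | h1
    · have g1 : Φ (1+x-y-e) ≤ Φ (1+x+y+e) := hmono (by linarith)
      have g2 : Φ (x+y-1-e) ≤ Φ (x-y-1+e) := hmono (by linarith)
      linarith
    rcases le_or_gt 2 (2*e) with h2 | h2
    · have g1 : Φ (x+y-1-e) ≤ Φ (1+x+y+e) := hmono (by linarith)
      have g2 : Φ (1+x-y-e) ≤ Φ (x-y-1+e) := hmono (by linarith)
      linarith
    · set L : ℝ := 2*y - 2*e with hL'
      have hL : 0 ≤ L := by simp only [hL']; linarith
      have hB := lemB hodd hmono hconv (p := x-y-1+e) (r := 1+x-y-e) hL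
        (abs_le.2 ⟨by linarith, by linarith⟩)
      rw [show (x-y-1+e + L : ℝ) = x+y-1-e by simp only [hL']; ring] at hB
      have g3 : Φ (1+x-y-e + L) ≤ Φ (1+x+y+e) := hmono (by simp only [hL']; linarith)
      linarith
  have E1 : Φ (1+x+y+e) = |1+x+y+x*y| ^ q - |1+x+y| ^ q := by
    simp only [hΦ]
    rw [show (1+x+y+e+e : ℝ) = 1+x+y+x*y by rw [he']; ring,
      show (1+x+y+e-e : ℝ) = 1+x+y by ring]
  have E2 : Φ (x-y-1+e) = |1-x+y-x*y| ^ q - |1-x+y| ^ q := by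
    simp only [hΦ]
    rw [show (x-y-1+e+e : ℝ) = -(1-x+y-x*y) by rw [he']; ring,
      show (x-y-1+e-e : ℝ) = -(1-x+y) by ring, abs_neg, abs_neg]
  have E3 : Φ (1+x-y-e) = |1+x-y| ^ q - |1+x-y-x*y| ^ q := by
    simp only [hΦ]
    rw [show (1+x-y-e+e : ℝ) = 1+x-y by ring,
      show (1+x-y-e-e : ℝ) = 1+x-y-x*y by rw [he']; ring]
  have E4 : Φ (x+y-1-e) = |1-x-y| ^ q - |1-x-y+x*y| ^ q := by
    simp only [hΦ]
    rw [show (x+y-1-e+e : ℝ) = -(1-x-y) by ring,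
      show (x+y-1-e-e : ℝ) = -(1-x-y+x*y) by rw [he']; ring, abs_neg, abs_neg]
  have hRHS : (|1+x| ^ q + |1-x| ^ q) * (|1+y| ^ q + |1-y| ^ q) =
      |1+x+y+x*y| ^ q + |1+x-y-x*y| ^ q + |1-x+y-x*y| ^ q + |1-x-y+x*y| ^ q := by
    have m1 : |1+x| ^ q * |1+y| ^ q = |1+x+y+x*y| ^ q := by
      rw [← Real.mul_rpow (abs_nonneg _) (abs_nonneg _), ← abs_mul,
        show ((1+x)*(1+y) : ℝ) = 1+x+y+x*y by ring]
    have m2 : |1+x| ^ q * |1-y| ^ q = |1+x-y-x*y| ^ q := by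
      rw [← Real.mul_rpow (abs_nonneg _) (abs_nonneg _), ← abs_mul,
        show ((1+x)*(1-y) : ℝ) = 1+x-y-x*y by ring]
    have m3 : |1-x| ^ q * |1+y| ^ q = |1-x+y-x*y| ^ q := by
      rw [← Real.mul_rpow (abs_nonneg _) (abs_nonneg _), ← abs_mul,
        show ((1-x)*(1+y) : ℝ) = 1-x+y-x*y by ring]
    have m4 : |1-x| ^ q * |1-y| ^ q = |1-x-y+x*y| ^ q := by
      rw [← Real.mul_rpow (abs_nonneg _) (abs_nonneg _), ← abs_mul,
        show ((1-x)*(1-y) : ℝ) = 1-x-y+x*y by ring]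
    rw [add_mul, mul_add, mul_add, m1, m2, m3, m4]
    ring
  rw [hRHS]
  rw [E1, E2, E3, E4] at main
  linarith

/-- Scalar inequality for nonnegative `x, y`. -/
private lemma lemA_nonneg (hq : 2 ≤ q) {x y : ℝ} (hx : 0 ≤ x) (hy : 0 ≤ y) :
    |1+x+y| ^ q + |1-x-y| ^ q + |1+x-y| ^ q + |1-x+y| ^ q ≤
      (|1+x| ^ q + |1-x| ^ q) * (|1+y| ^ q + |1-y| ^ q) := by
  rcases le_total y x with h | h
  · exact lemA_core hq hy h
  · have H := lemA_core hq hx h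
    rw [show (1+y+x : ℝ) = 1+x+y by ring, show (1-y-x : ℝ) = 1-x-y by ring,
      show (1+y-x : ℝ) = 1-x+y by ring, show (1-y+x : ℝ) = 1+x-y by ring] at H
    nlinarith [H]

/-- The scalar inequality of Whittle: for `q ≥ 2` and all real `x, y`. -/
private lemma lemA (hq : 2 ≤ q) (x y : ℝ) :
    |1+x+y| ^ q + |1-x-y| ^ q + |1+x-y| ^ q + |1-x+y| ^ q ≤
      (|1+x| ^ q + |1-x| ^ q) * (|1+y| ^ q + |1-y| ^ q) := by
  rcases le_or_gt 0 x with hx | hx <;> rcases le_or_gt 0 y with hy | hy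
  · exact lemA_nonneg hq hx hy
  · have H := lemA_nonneg hq hx (by linarith : (0:ℝ) ≤ -y)
    rw [show (1+x+-y : ℝ) = 1+x-y by ring, show (1-x- -y : ℝ) = 1-x+y by ring,
      show (1+x- -y : ℝ) = 1+x+y by ring, show (1-x+-y : ℝ) = 1-x-y by ring,
      show (1+-y : ℝ) = 1-y by ring, show (1- -y : ℝ) = 1+y by ring] at H
    nlinarith [H]
  · have H := lemA_nonneg hq (by linarith : (0:ℝ) ≤ -x) hy
    rw [show (1+-x+y : ℝ) = 1-x+y by ring, show (1- -x-y : ℝ) = 1+x-y by ring,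
      show (1+-x-y : ℝ) = 1-x-y by ring, show (1- -x+y : ℝ) = 1+x+y by ring,
      show (1+-x : ℝ) = 1-x by ring, show (1- -x : ℝ) = 1+x by ring] at H
    nlinarith [H]
  · have H := lemA_nonneg hq (by linarith : (0:ℝ) ≤ -x) (by linarith : (0:ℝ) ≤ -y)
    rw [show (1+-x+-y : ℝ) = 1-x-y by ring, show (1- -x- -y : ℝ) = 1+x+y by ring,
      show (1+-x- -y : ℝ) = 1-x+y by ring, show (1- -x+-y : ℝ) = 1+x-y by ring,
      show (1+-x : ℝ) = 1-x by ring, show (1- -x : ℝ) = 1+x by ring,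
      show (1+-y : ℝ) = 1-y by ring, show (1- -y : ℝ) = 1+y by ring] at H
    nlinarith [H]

end Scalar
section Prob

variable {q : ℝ}

private lemma cont_abs_rpow (hq : 2 ≤ q) : Continuous (fun u : ℝ => |u| ^ q) :=
  continuous_abs.rpow_const (fun _ => Or.inr (by linarith))

private lemma rpow_two_add_le (hq : 2 ≤ q) {a b : ℝ} (ha : 0 ≤ a) (hb : 0 ≤ b) :
    (a + b) ^ q ≤ 2 ^ q * (a ^ q + b ^ q) := by
  have h2q : (0:ℝ) ≤ 2 ^ q := Real.rpow_nonneg (by norm_num) q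
  have hab : a + b ≤ 2 * max a b := by
    rcases le_total a b with h | h
    · rw [max_eq_right h]; linarith
    · rw [max_eq_left h]; linarith
  have h1 : (a+b) ^ q ≤ (2 * max a b) ^ q :=
    Real.rpow_le_rpow (by linarith) hab (by linarith)
  have h2 : (2 * max a b) ^ q = 2 ^ q * (max a b) ^ q :=
    Real.mul_rpow (by norm_num) (le_max_iff.2 (Or.inl ha))
  have h3 : (max a b) ^ q ≤ a ^ q + b ^ q := by
    rcases le_total a b with h | h
    · rw [max_eq_right h]; nlinarith [Real.rpow_nonneg ha q]
    · rw [max_eq_left h]; nlinarith [Real.rpow_nonneg hb q]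
  calc (a+b)^q ≤ 2 ^ q * (max a b) ^ q := by rw [← h2]; exact h1
    _ ≤ 2 ^ q * (a ^ q + b ^ q) := by nlinarith

private lemma tri_aux (a b : ℝ) : |1 + a + b| ≤ 1 + |a| + |b| := by
  have h1 := abs_add_le (1 + a) b
  have h2 := abs_add_le 1 a
  rw [abs_one] at h2
  linarith

private lemma tri_p (s : ℝ) : |1 + s| ≤ 1 + |s| := by
  have := abs_add_le 1 s; rw [abs_one] at this; linarith

private lemma tri_m (s : ℝ) : |1 - s| ≤ 1 + |s| := by
  rw [show (1 - s : ℝ) = 1 + -s by ring]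
  simpa [abs_neg] using tri_p (-s)

/-- If `|L s| ≤ 1 + |s|` then `|L s| ^ q` is integrable. -/
private lemma int_shift {μ : Measure ℝ} [IsProbabilityMeasure μ]
    (hq : 2 ≤ q) (hμi : Integrable (fun s : ℝ => |s| ^ q) μ)
    {L : ℝ → ℝ} (hL : Continuous L) (hbd : ∀ s, |L s| ≤ 1 + |s|) :
    Integrable (fun s : ℝ => |L s| ^ q) μ := by
  have h2q : (0:ℝ) ≤ 2 ^ q := Real.rpow_nonneg (by norm_num) q
  refine Integrable.mono' ((hμi.const_mul (2 ^ q)).add (integrable_const (2 ^ q)))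
    ((cont_abs_rpow hq).comp hL).aestronglyMeasurable (ae_of_all _ fun s => ?_)
  rw [Real.norm_eq_abs, abs_of_nonneg (Real.rpow_nonneg (abs_nonneg _) q)]
  calc |L s| ^ q ≤ (1 + |s|) ^ q :=
        Real.rpow_le_rpow (abs_nonneg _) (hbd s) (by linarith)
    _ ≤ 2 ^ q * (1 ^ q + |s| ^ q) := rpow_two_add_le hq (by norm_num) (abs_nonneg s)
    _ = (fun s : ℝ => 2 ^ q * |s| ^ q + 2 ^ q) s := by rw [Real.one_rpow]; ring

/-- If `|L p| ≤ 1 + |p.1| + |p.2|` then `|L p| ^ q` is integrable on a product. -/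
private lemma int_dom (hq : 2 ≤ q) (μ ν : Measure ℝ) [IsProbabilityMeasure μ]
    [IsProbabilityMeasure ν]
    (hμi : Integrable (fun s : ℝ => |s| ^ q) μ) (hνi : Integrable (fun x : ℝ => |x| ^ q) ν)
    {L : ℝ × ℝ → ℝ} (hL : Continuous L) (hbd : ∀ p, |L p| ≤ 1 + |p.1| + |p.2|) :
    Integrable (fun p : ℝ × ℝ => |L p| ^ q) (μ.prod ν) := by
  have h2q : (0:ℝ) ≤ 2 ^ q := Real.rpow_nonneg (by norm_num) q
  have hcont := cont_abs_rpow (q := q) hq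
  have hμ1 : Integrable (fun p : ℝ × ℝ => |p.1| ^ q) (μ.prod ν) := by
    have h := integrable_map_measure (f := Prod.fst) (μ := μ.prod ν)
      hcont.aestronglyMeasurable measurable_fst.aemeasurable
    rw [show (μ.prod ν).map Prod.fst = (μ.prod ν).fst from rfl, Measure.fst_prod] at h
    exact h.1 hμi
  have hν1 : Integrable (fun p : ℝ × ℝ => |p.2| ^ q) (μ.prod ν) := by
    have h := integrable_map_measure (f := Prod.snd) (μ := μ.prod ν)
      hcont.aestronglyMeasurable measurable_snd.aemeasurable
    rw [show (μ.prod ν).map Prod.snd = (μ.prod ν).snd from rfl, Measure.snd_prod] at h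
    exact h.1 hνi
  refine Integrable.mono' (((hμ1.add hν1).const_mul (2 ^ q * 2 ^ q)).add (integrable_const (2 ^ q)))
    ((cont_abs_rpow hq).comp hL).aestronglyMeasurable (ae_of_all _ fun p => ?_)
  rw [Real.norm_eq_abs, abs_of_nonneg (Real.rpow_nonneg (abs_nonneg _) q)]
  have step1 : |L p| ^ q ≤ (1 + (|p.1| + |p.2|)) ^ q := by
    apply Real.rpow_le_rpow (abs_nonneg _) _ (by linarith)
    have := hbd p; linarith
  have step2 : (1 + (|p.1| + |p.2|)) ^ q ≤ 2 ^ q * (1 ^ q + (|p.1| + |p.2|) ^ q) :=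
    rpow_two_add_le hq (by norm_num) (by positivity)
  have step3 : (|p.1| + |p.2|) ^ q ≤ 2 ^ q * (|p.1| ^ q + |p.2| ^ q) :=
    rpow_two_add_le hq (abs_nonneg _) (abs_nonneg _)
  rw [Real.one_rpow] at step2
  simp only [Pi.add_apply]
  nlinarith [step1, step2, step3]

/-- Key inequality at the level of a product of two symmetric laws on `ℝ`. -/
private lemma key_prod (hq : 2 ≤ q) (μ ν : Measure ℝ) [IsProbabilityMeasure μ]
    [IsProbabilityMeasure ν]
    (hμs : μ.map (fun s : ℝ => -s) = μ) (hνs : ν.map (fun x : ℝ => -x) = ν)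
    (hμi : Integrable (fun s : ℝ => |s| ^ q) μ) (hνi : Integrable (fun x : ℝ => |x| ^ q) ν) :
    ∫ p : ℝ × ℝ, |1 + p.1 + p.2| ^ q ∂(μ.prod ν)
      ≤ (∫ s, |1 + s| ^ q ∂μ) * (∫ x, |1 + x| ^ q ∂ν) := by
  have hcont := cont_abs_rpow (q := q) hq
  set P := μ.prod ν with hP
  -- the four sign-flipped integrands
  set F1 : ℝ × ℝ → ℝ := fun p => |1 + p.1 + p.2| ^ q with hF1
  set F2 : ℝ × ℝ → ℝ := fun p => |1 - p.1 + p.2| ^ q with hF2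
  set F3 : ℝ × ℝ → ℝ := fun p => |1 + p.1 - p.2| ^ q with hF3
  set F4 : ℝ × ℝ → ℝ := fun p => |1 - p.1 - p.2| ^ q with hF4
  have hiF1 : Integrable F1 P :=
    int_dom hq μ ν hμi hνi (L := fun p => 1 + p.1 + p.2) (by fun_prop) (fun p => tri_aux _ _)
  have hiF2 : Integrable F2 P := by
    refine int_dom hq μ ν hμi hνi (L := fun p => 1 - p.1 + p.2) (by fun_prop) (fun p => ?_)
    show |1 - p.1 + p.2| ≤ 1 + |p.1| + |p.2|
    rw [show (1 - p.1 + p.2 : ℝ) = 1 + -p.1 + p.2 by ring]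
    simpa [abs_neg] using tri_aux (-p.1) p.2
  have hiF3 : Integrable F3 P := by
    refine int_dom hq μ ν hμi hνi (L := fun p => 1 + p.1 - p.2) (by fun_prop) (fun p => ?_)
    show |1 + p.1 - p.2| ≤ 1 + |p.1| + |p.2|
    rw [show (1 + p.1 - p.2 : ℝ) = 1 + p.1 + -p.2 by ring]
    simpa [abs_neg] using tri_aux p.1 (-p.2)
  have hiF4 : Integrable F4 P := by
    refine int_dom hq μ ν hμi hνi (L := fun p => 1 - p.1 - p.2) (by fun_prop) (fun p => ?_)
    show |1 - p.1 - p.2| ≤ 1 + |p.1| + |p.2|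
    rw [show (1 - p.1 - p.2 : ℝ) = 1 + -p.1 + -p.2 by ring]
    simpa [abs_neg] using tri_aux (-p.1) (-p.2)
  -- h functions
  set h : ℝ → ℝ := fun u => |1 + u| ^ q + |1 - u| ^ q with hh
  have hμp : Integrable (fun s : ℝ => |1 + s| ^ q) μ :=
    int_shift hq hμi (L := fun s => 1 + s) (by fun_prop) tri_p
  have hμm : Integrable (fun s : ℝ => |1 - s| ^ q) μ :=
    int_shift hq hμi (L := fun s => 1 - s) (by fun_prop) tri_m
  have hνp : Integrable (fun s : ℝ => |1 + s| ^ q) ν :=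
    int_shift hq hνi (L := fun s => 1 + s) (by fun_prop) tri_p
  have hνm : Integrable (fun s : ℝ => |1 - s| ^ q) ν :=
    int_shift hq hνi (L := fun s => 1 - s) (by fun_prop) tri_m
  have hμh : Integrable h μ := hμp.add hμm
  have hνh : Integrable h ν := hνp.add hνm
  have hiH : Integrable (fun p : ℝ × ℝ => h p.1 * h p.2) P := hμh.mul_prod hνh
  -- sign flip invariance of P
  have flip1 : P.map (Prod.map (fun s : ℝ => -s) id) = P := by
    rw [hP, ← Measure.map_prod_map _ _ measurable_neg measurable_id, hμs, Measure.map_id]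
  have flip2 : P.map (Prod.map id (fun x : ℝ => -x)) = P := by
    rw [hP, ← Measure.map_prod_map _ _ measurable_id measurable_neg, hνs, Measure.map_id]
  have flip3 : P.map (Prod.map (fun s : ℝ => -s) (fun x : ℝ => -x)) = P := by
    rw [hP, ← Measure.map_prod_map _ _ measurable_neg measurable_neg, hμs, hνs]
  -- equalities of integrals
  have hmeas1 : Measurable (Prod.map (fun s : ℝ => -s) (id : ℝ → ℝ)) :=
    measurable_neg.prodMap measurable_id
  have hmeas2 : Measurable (Prod.map (id : ℝ → ℝ) (fun x : ℝ => -x)) :=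
    measurable_id.prodMap measurable_neg
  have hmeas3 : Measurable (Prod.map (fun s : ℝ => -s) (fun x : ℝ => -x)) :=
    measurable_neg.prodMap measurable_neg
  have hcF1 : Continuous F1 := by
    rw [hF1]
    exact Continuous.comp (cont_abs_rpow hq)
      (by fun_prop : Continuous fun p : ℝ × ℝ => 1 + p.1 + p.2)
  have e2 : ∫ p, F1 p ∂P = ∫ p, F2 p ∂P := by
    conv_lhs => rw [← flip1]
    rw [integral_map hmeas1.aemeasurable hcF1.aestronglyMeasurable]
    congr 1
  have e3 : ∫ p, F1 p ∂P = ∫ p, F3 p ∂P := by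
    conv_lhs => rw [← flip2]
    rw [integral_map hmeas2.aemeasurable hcF1.aestronglyMeasurable]
    congr 1
  have e4 : ∫ p, F1 p ∂P = ∫ p, F4 p ∂P := by
    conv_lhs => rw [← flip3]
    rw [integral_map hmeas3.aemeasurable hcF1.aestronglyMeasurable]
    congr 1
  -- pointwise bound via lemA
  have hsum_le : ∫ p, (F1 p + F2 p + F3 p + F4 p) ∂P ≤ ∫ p, h p.1 * h p.2 ∂P := by
    refine integral_mono ((hiF1.add hiF2).add hiF3 |>.add hiF4 :
      Integrable (fun p : ℝ × ℝ => F1 p + F2 p + F3 p + F4 p) P) hiH fun p => ?_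
    have := lemA hq p.1 p.2
    simp only [hF1, hF2, hF3, hF4, hh]
    calc |1 + p.1 + p.2| ^ q + |1 - p.1 + p.2| ^ q + |1 + p.1 - p.2| ^ q
          + |1 - p.1 - p.2| ^ q
        = |1+p.1+p.2| ^ q + |1-p.1-p.2| ^ q + |1+p.1-p.2| ^ q + |1-p.1+p.2| ^ q := by ring
      _ ≤ (|1+p.1| ^ q + |1-p.1| ^ q) * (|1+p.2| ^ q + |1-p.2| ^ q) := this
  have i12 : Integrable (fun p : ℝ × ℝ => F1 p + F2 p) P := hiF1.add hiF2
  have i123 : Integrable (fun p : ℝ × ℝ => F1 p + F2 p + F3 p) P := i12.add hiF3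
  have hsum_eq : ∫ p, (F1 p + F2 p + F3 p + F4 p) ∂P
      = ∫ p, F1 p ∂P + ∫ p, F2 p ∂P + ∫ p, F3 p ∂P + ∫ p, F4 p ∂P := by
    rw [integral_add i123 hiF4, integral_add i12 hiF3, integral_add hiF1 hiF2]
  have hHeq : ∫ p, h p.1 * h p.2 ∂P = (∫ s, h s ∂μ) * (∫ x, h x ∂ν) :=
    integral_prod_mul h h
  -- fold the h integrals
  have hfoldμ : ∫ s, h s ∂μ = 2 * ∫ s, |1 + s| ^ q ∂μ := by
    have hneg : ∫ s, |1 - s| ^ q ∂μ = ∫ s, |1 + s| ^ q ∂μ := by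
      have hmap := integral_map (φ := fun s : ℝ => -s) (μ := μ)
        measurable_neg.aemeasurable
        (f := fun s : ℝ => |1 + s| ^ q)
        ((cont_abs_rpow hq).comp (by fun_prop : Continuous fun s : ℝ => 1 + s)
          |>.aestronglyMeasurable)
      rw [hμs] at hmap
      rw [show (fun s : ℝ => |1 - s| ^ q) = fun s : ℝ => |1 + -s| ^ q from
        funext fun s => by rw [show (1 - s : ℝ) = 1 + -s by ring]]
      exact hmap.symm
    rw [hh]
    rw [integral_add hμp hμm, hneg]; ring
  have hfoldν : ∫ x, h x ∂ν = 2 * ∫ x, |1 + x| ^ q ∂ν := by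
    have hneg : ∫ x, |1 - x| ^ q ∂ν = ∫ x, |1 + x| ^ q ∂ν := by
      have hmap := integral_map (φ := fun s : ℝ => -s) (μ := ν)
        measurable_neg.aemeasurable
        (f := fun s : ℝ => |1 + s| ^ q)
        ((cont_abs_rpow hq).comp (by fun_prop : Continuous fun s : ℝ => 1 + s)
          |>.aestronglyMeasurable)
      rw [hνs] at hmap
      rw [show (fun s : ℝ => |1 - s| ^ q) = fun s : ℝ => |1 + -s| ^ q from
        funext fun s => by rw [show (1 - s : ℝ) = 1 + -s by ring]]
      exact hmap.symm
    rw [hh]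
    rw [integral_add hνp hνm, hneg]; ring
  rw [hsum_eq, ← e2, ← e3, ← e4, hHeq, hfoldμ, hfoldν] at hsum_le
  linarith

end Prob

/-- A random variable is symmetric if it has the same distribution as its negative. -/
def IsSymmetricRV {Ω : Type*} [MeasureSpace Ω] (X : Ω → ℝ) : Prop :=
  Measure.map X ℙ = Measure.map (fun ω => -X ω) ℙ

section Main

variable {q : ℝ} {Ω : Type} [MeasureSpace Ω] [IsProbabilityMeasure (ℙ : Measure Ω)]

private lemma key_rv (hq : 2 ≤ q) {S X : Ω → ℝ} (hmS : Measurable S) (hmX : Measurable X)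
    (hind : IndepFun S X ℙ)
    (hsS : Measure.map S ℙ = Measure.map (fun ω => -S ω) ℙ)
    (hsX : Measure.map X ℙ = Measure.map (fun ω => -X ω) ℙ)
    (hiS : Integrable (fun ω => |S ω| ^ q) ℙ) (hiX : Integrable (fun ω => |X ω| ^ q) ℙ) :
    ∫ ω, |1 + S ω + X ω| ^ q ≤ (∫ ω, |1 + S ω| ^ q) * ∫ ω, |1 + X ω| ^ q := by
  have hcont := cont_abs_rpow (q := q) hq
  set μ := Measure.map S ℙ with hμ
  set ν := Measure.map X ℙ with hν
  haveI : IsProbabilityMeasure μ := Measure.isProbabilityMeasure_map hmS.aemeasurable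
  haveI : IsProbabilityMeasure ν := Measure.isProbabilityMeasure_map hmX.aemeasurable
  have hμs : μ.map (fun s : ℝ => -s) = μ := by
    rw [hμ, Measure.map_map measurable_neg hmS]
    exact hsS.symm
  have hνs : ν.map (fun x : ℝ => -x) = ν := by
    rw [hν, Measure.map_map measurable_neg hmX]
    exact hsX.symm
  have hμi : Integrable (fun s : ℝ => |s| ^ q) μ :=
    (integrable_map_measure hcont.aestronglyMeasurable hmS.aemeasurable).2 hiS
  have hνi : Integrable (fun x : ℝ => |x| ^ q) ν :=
    (integrable_map_measure hcont.aestronglyMeasurable hmX.aemeasurable).2 hiX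
  have hjoint : Measure.map (fun ω => (S ω, X ω)) ℙ = μ.prod ν :=
    (indepFun_iff_map_prod_eq_prod_map_map hmS.aemeasurable hmX.aemeasurable).1 hind
  have key := key_prod hq μ ν hμs hνs hμi hνi
  have hL := integral_map (μ := (ℙ : Measure Ω)) (φ := fun ω => (S ω, X ω)) (hmS.prodMk hmX).aemeasurable
    (f := fun p : ℝ × ℝ => |1 + p.1 + p.2| ^ q)
    ((Continuous.comp hcont
      (by fun_prop : Continuous fun p : ℝ × ℝ => 1 + p.1 + p.2)).aestronglyMeasurable)
  rw [hjoint] at hL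
  have hS1 := integral_map (μ := (ℙ : Measure Ω)) (φ := S) hmS.aemeasurable (f := fun s : ℝ => |1 + s| ^ q)
    ((Continuous.comp hcont
      (by fun_prop : Continuous fun s : ℝ => 1 + s)).aestronglyMeasurable)
  have hX1 := integral_map (μ := (ℙ : Measure Ω)) (φ := X) hmX.aemeasurable (f := fun x : ℝ => |1 + x| ^ q)
    ((Continuous.comp hcont
      (by fun_prop : Continuous fun x : ℝ => 1 + x)).aestronglyMeasurable)
  rw [← hL, ← hS1, ← hX1]
  exact key

private lemma symm_add {S X : Ω → ℝ} (hmS : Measurable S) (hmX : Measurable X)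
    (hind : IndepFun S X ℙ)
    (hsS : Measure.map S ℙ = Measure.map (fun ω => -S ω) ℙ)
    (hsX : Measure.map X ℙ = Measure.map (fun ω => -X ω) ℙ) :
    Measure.map (fun ω => S ω + X ω) ℙ = Measure.map (fun ω => -(S ω + X ω)) ℙ := by
  have hadd : Measurable (fun p : ℝ × ℝ => p.1 + p.2) := measurable_fst.add measurable_snd
  have hjoint : Measure.map (fun ω => (S ω, X ω)) ℙ
      = (Measure.map S ℙ).prod (Measure.map X ℙ) :=
    (indepFun_iff_map_prod_eq_prod_map_map hmS.aemeasurable hmX.aemeasurable).1 hind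
  have hindneg : IndepFun (fun ω => -S ω) (fun ω => -X ω) ℙ :=
    hind.comp measurable_neg measurable_neg
  have hjointneg : Measure.map (fun ω => (-S ω, -X ω)) ℙ
      = (Measure.map (fun ω => -S ω) ℙ).prod (Measure.map (fun ω => -X ω) ℙ) :=
    (indepFun_iff_map_prod_eq_prod_map_map hmS.neg.aemeasurable hmX.neg.aemeasurable).1 hindneg
  calc Measure.map (fun ω => S ω + X ω) ℙ
      = Measure.map (fun p : ℝ × ℝ => p.1 + p.2) (Measure.map (fun ω => (S ω, X ω)) ℙ) := by
        rw [Measure.map_map hadd (hmS.prodMk hmX)]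
        rfl
    _ = Measure.map (fun p : ℝ × ℝ => p.1 + p.2) (Measure.map (fun ω => (-S ω, -X ω)) ℙ) := by
        rw [hjoint, hjointneg, ← hsS, ← hsX]
    _ = Measure.map (fun ω => -(S ω + X ω)) ℙ := by
        rw [Measure.map_map (f := fun ω => (-S ω, -X ω)) hadd (hmS.neg.prodMk hmX.neg)]
        congr 1
        funext ω
        show -S ω + -X ω = -(S ω + X ω)
        ring

end Main

theorem phi_submultiplicative_symmetric
    (Ω : Type) [MeasureSpace Ω] [IsProbabilityMeasure (ℙ : Measure Ω)]
    (n : ℕ) (Y : Fin n → Ω → ℝ) (hmeas : ∀ i, Measurable (Y i))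
    (hindep : iIndepFun Y ℙ)
    (hsymm : ∀ i, IsSymmetricRV (Y i))
    (q : ℝ) (hq : 2 ≤ q) (hint : ∀ i, Integrable (fun ω => |Y i ω| ^ q)) :
    ∫ ω, |1 + ∑ i, Y i ω| ^ q ≤ ∏ i, ∫ ω, |1 + Y i ω| ^ q := by
  classical
  have key : ∀ s : Finset (Fin n),
      Integrable (fun ω => |∑ i ∈ s, Y i ω| ^ q) ℙ ∧
      Measure.map (fun ω => ∑ i ∈ s, Y i ω) ℙ
        = Measure.map (fun ω => -∑ i ∈ s, Y i ω) ℙ ∧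
      ∫ ω, |1 + ∑ i ∈ s, Y i ω| ^ q ≤ ∏ i ∈ s, ∫ ω, |1 + Y i ω| ^ q := by
    intro s
    induction s using Finset.induction_on with
    | empty =>
      refine ⟨?_, ?_, ?_⟩
      · simp only [Finset.sum_empty]
        exact integrable_const _
      · simp
      · simp only [Finset.sum_empty, add_zero, Finset.prod_empty, abs_one, Real.one_rpow]
        simp
    | @insert i s hi ih =>
      obtain ⟨ihInt, ihSym, ihBound⟩ := ih
      have hmS : Measurable (fun ω => ∑ j ∈ s, Y j ω) :=
        Finset.measurable_sum s (fun j _ => hmeas j)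
      have hind : IndepFun (fun ω => ∑ j ∈ s, Y j ω) (Y i) ℙ := by
        have h := hindep.indepFun_finsetSum_of_notMem hmeas hi
        have he : (∑ j ∈ s, Y j) = fun ω => ∑ j ∈ s, Y j ω := by
          funext ω; exact Finset.sum_apply ω s Y
        rwa [he] at h
      refine ⟨?_, ?_, ?_⟩
      · rw [show (fun ω => |∑ j ∈ insert i s, Y j ω| ^ q)
            = fun ω => |Y i ω + ∑ j ∈ s, Y j ω| ^ q from
          funext fun ω => by rw [Finset.sum_insert hi]]
        refine Integrable.mono' (((hint i).add ihInt).const_mul (2 ^ q))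
          (((cont_abs_rpow hq).measurable.comp ((hmeas i).add hmS)).aestronglyMeasurable)
          (ae_of_all _ fun ω => ?_)
        rw [Real.norm_eq_abs, abs_of_nonneg (Real.rpow_nonneg (abs_nonneg _) q)]
        calc |Y i ω + ∑ j ∈ s, Y j ω| ^ q
            ≤ (|Y i ω| + |∑ j ∈ s, Y j ω|) ^ q :=
              Real.rpow_le_rpow (abs_nonneg _) (abs_add_le _ _) (by linarith)
          _ ≤ 2 ^ q * (|Y i ω| ^ q + |∑ j ∈ s, Y j ω| ^ q) :=
              rpow_two_add_le hq (abs_nonneg _) (abs_nonneg _)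
          _ = 2 ^ q * ((fun ω => |Y i ω| ^ q) + fun ω => |∑ j ∈ s, Y j ω| ^ q) ω := by
              simp [Pi.add_apply]
      · rw [show (fun ω => ∑ j ∈ insert i s, Y j ω)
            = fun ω => (∑ j ∈ s, Y j ω) + Y i ω from
          funext fun ω => by rw [Finset.sum_insert hi]; ring,
          show (fun ω => -∑ j ∈ insert i s, Y j ω)
            = fun ω => -((∑ j ∈ s, Y j ω) + Y i ω) from
          funext fun ω => by rw [Finset.sum_insert hi]; ring]
        exact symm_add hmS (hmeas i) hind ihSym (hsymm i)
      · have hstep := key_rv hq hmS (hmeas i) hind ihSym (hsymm i) ihInt (hint i)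
        calc ∫ ω, |1 + ∑ j ∈ insert i s, Y j ω| ^ q
            = ∫ ω, |1 + (∑ j ∈ s, Y j ω) + Y i ω| ^ q := by
              congr 1
              funext ω
              congr 2
              rw [Finset.sum_insert hi]
              ring
          _ ≤ (∫ ω, |1 + ∑ j ∈ s, Y j ω| ^ q) * ∫ ω, |1 + Y i ω| ^ q := hstep
          _ ≤ (∏ j ∈ s, ∫ ω, |1 + Y j ω| ^ q) * ∫ ω, |1 + Y i ω| ^ q :=
              mul_le_mul_of_nonneg_right ihBound
                (integral_nonneg fun ω => Real.rpow_nonneg (abs_nonneg _) q)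
          _ = ∏ j ∈ insert i s, ∫ ω, |1 + Y j ω| ^ q := by
              rw [Finset.prod_insert hi]; ring
  exact (key Finset.univ).2.2
end

section
/- Let q ≥ 2 be a real number and let Y be a symmetric random variable with E|Y|^q < ∞. Then E[|Y|^q] ≤ φ_q(Y), i.e., ‖Y‖_q^q ≤ E[|1 + Y|^q]. -/
open MeasureTheory ProbabilityTheory Finset Real

lemma real_rpow_add_le (a b : ℝ) (ha : 0 ≤ a) (hb : 0 ≤ b) {p : ℝ} (hp : 1 ≤ p) :
    (a + b) ^ p ≤ 2 ^ (p - 1) * (a ^ p + b ^ p) := by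
  have h := NNReal.rpow_add_le_mul_rpow_add_rpow ⟨a, ha⟩ ⟨b, hb⟩ hp
  exact_mod_cast h

lemma pointwise_key (y : ℝ) {p : ℝ} (hp : 1 ≤ p) :
    |y| ^ p ≤ (|1 + y| ^ p + |1 - y| ^ p) / 2 := by
  have h0 : (0:ℝ) < p := by linarith
  have h1 : (2:ℝ) * |y| ≤ |1 + y| + |1 - y| := by
    calc (2:ℝ) * |y| = |(1 + y) - (1 - y)| := by
          rw [show (1 + y) - (1 - y) = 2 * y by ring, abs_mul, abs_two]
      _ ≤ |1 + y| + |1 - y| := abs_sub _ _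
  have h2 : (2 * |y|) ^ p ≤ (|1 + y| + |1 - y|) ^ p :=
    Real.rpow_le_rpow (by positivity) h1 h0.le
  have h3 : (|1 + y| + |1 - y|) ^ p ≤ 2 ^ (p - 1) * (|1 + y| ^ p + |1 - y| ^ p) :=
    real_rpow_add_le _ _ (abs_nonneg _) (abs_nonneg _) hp
  have h4 : (2 * |y|) ^ p = 2 ^ p * |y| ^ p :=
    Real.mul_rpow (by norm_num) (abs_nonneg _)
  have h5 : (2:ℝ) ^ (p - 1) = 2 ^ p / 2 := by
    rw [Real.rpow_sub (by norm_num), Real.rpow_one]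
  have h2p : (0:ℝ) < 2 ^ p := Real.rpow_pos_of_pos (by norm_num) p
  rw [h4] at h2
  have h6 : 2 ^ p * |y| ^ p ≤ 2 ^ p * ((|1 + y| ^ p + |1 - y| ^ p) / 2) := by
    rw [h5] at h3; linarith
  exact (mul_le_mul_iff_right₀ h2p).mp h6

theorem moment_le_phi_symmetric
    (Ω : Type) [MeasureSpace Ω] [IsProbabilityMeasure (ℙ : Measure Ω)]
    (Y : Ω → ℝ) (hmeas : Measurable Y) (hsymm : IsSymmetricRV Y)
    (q : ℝ) (hq : 2 ≤ q) (hint : Integrable (fun ω => |Y ω| ^ q)) :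
    ∫ ω, |Y ω| ^ q ≤ ∫ ω, |1 + Y ω| ^ q := by
  have hq1 : (1:ℝ) ≤ q := by linarith
  have hq0 : (0:ℝ) ≤ q := by linarith
  have hcont : ∀ c : ℝ, Continuous (fun x : ℝ => |c + x| ^ q) := by
    intro c
    apply Continuous.rpow_const (by continuity)
    intro x; exact Or.inr hq0
  -- integrability of |c + Y|^q for |c| ≤ 1
  have hintg : Integrable (fun ω => 2 ^ (q-1) * ((1:ℝ) + |Y ω| ^ q)) :=
    (((integrable_const (1:ℝ)).add hint).const_mul _)
  have hintp : ∀ c : ℝ, |c| ≤ 1 → Integrable (fun ω => |c + Y ω| ^ q) := by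
    intro c hc
    refine hintg.mono' ?_ ?_
    · exact ((hcont c).measurable.comp hmeas).aestronglyMeasurable
    · filter_upwards with ω
      rw [Real.norm_eq_abs, abs_of_nonneg (by positivity)]
      have hcq : |c| ^ q ≤ 1 := by
        calc |c| ^ q ≤ 1 ^ q := Real.rpow_le_rpow (abs_nonneg _) hc hq0
          _ = 1 := Real.one_rpow q
      have h2p : (0:ℝ) < 2 ^ (q-1) := Real.rpow_pos_of_pos (by norm_num) _
      calc |c + Y ω| ^ q ≤ (|c| + |Y ω|) ^ q :=
            Real.rpow_le_rpow (abs_nonneg _) (abs_add_le _ _) hq0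
        _ ≤ 2 ^ (q-1) * (|c| ^ q + |Y ω| ^ q) :=
            real_rpow_add_le _ _ (abs_nonneg _) (abs_nonneg _) hq1
        _ ≤ 2 ^ (q-1) * (1 + |Y ω| ^ q) := by
            apply mul_le_mul_of_nonneg_left (by linarith) h2p.le
  have hI1 : Integrable (fun ω => |1 + Y ω| ^ q) := hintp 1 (by norm_num)
  have heq : (fun ω => |(-1) + Y ω| ^ q) = fun ω => |1 - Y ω| ^ q := by
    funext ω
    rw [show (-1) + Y ω = -(1 - Y ω) by ring, abs_neg]
  have hI2 : Integrable (fun ω => |1 - Y ω| ^ q) := heq ▸ hintp (-1) (by norm_num)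
  -- symmetry: ∫ |1 - Y|^q = ∫ |1 + Y|^q
  have hmap : ∫ ω, |1 - Y ω| ^ q = ∫ ω, |1 + Y ω| ^ q := by
    have hf : AEStronglyMeasurable (fun x : ℝ => |1 + x| ^ q) (Measure.map Y ℙ) :=
      (hcont 1).aestronglyMeasurable
    have hf' : AEStronglyMeasurable (fun x : ℝ => |1 + x| ^ q)
        (Measure.map (fun ω => -Y ω) ℙ) := (hcont 1).aestronglyMeasurable
    calc ∫ ω, |1 - Y ω| ^ q = ∫ ω, |1 + (-Y ω)| ^ q := by
          simp only [← sub_eq_add_neg]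
      _ = ∫ x, |1 + x| ^ q ∂(Measure.map (fun ω => -Y ω) ℙ) :=
          (integral_map hmeas.neg.aemeasurable hf').symm
      _ = ∫ x, |1 + x| ^ q ∂(Measure.map Y ℙ) := by rw [hsymm]
      _ = ∫ ω, |1 + Y ω| ^ q := integral_map hmeas.aemeasurable hf
  have hmono : ∫ ω, |Y ω| ^ q ≤ ∫ ω, (|1 + Y ω| ^ q + |1 - Y ω| ^ q) / 2 := by
    refine integral_mono hint ((hI1.add hI2).div_const 2) ?_
    intro ω; exact pointwise_key (Y ω) hq1
  calc ∫ ω, |Y ω| ^ q ≤ ∫ ω, (|1 + Y ω| ^ q + |1 - Y ω| ^ q) / 2 := hmono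
    _ = ((∫ ω, |1 + Y ω| ^ q) + ∫ ω, |1 - Y ω| ^ q) / 2 := by
        rw [integral_div, integral_add hI1 hI2]
    _ = ∫ ω, |1 + Y ω| ^ q := by rw [hmap]; ring
end

section
/- Let q ≥ 1 be a real number and let X_1, …, X_n be independent nonnegative random variables with E[X_i^q] < ∞ for each i. Then E[(1 + ∑_{i=1}^n X_i)^q] ≤ ∏_{i=1}^n E[(1 + X_i)^q]. -/
open MeasureTheory ProbabilityTheory Finset Real

lemma one_add_sum_le_prod_one_add' {ι : Type*} (s : Finset ι) (x : ι → ℝ)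
    (hx : ∀ i ∈ s, 0 ≤ x i) : 1 + ∑ i ∈ s, x i ≤ ∏ i ∈ s, (1 + x i) := by
  classical
  induction s using Finset.induction_on with
  | empty => simp
  | insert a s hi ih =>
    rw [Finset.sum_insert hi, Finset.prod_insert hi]
    have hxa : 0 ≤ x a := hx a (Finset.mem_insert_self a s)
    have hs : ∀ i ∈ s, 0 ≤ x i := fun i h => hx i (Finset.mem_insert_of_mem h)
    have hsum : 0 ≤ ∑ i ∈ s, x i := Finset.sum_nonneg hs
    have := ih hs
    nlinarith

theorem phi_submultiplicative_nonneg
    (Ω : Type) [MeasureSpace Ω] [IsProbabilityMeasure (ℙ : Measure Ω)]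
    (n : ℕ) (X : Fin n → Ω → ℝ) (hmeas : ∀ i, Measurable (X i))
    (hnonneg : ∀ i, 0 ≤ X i)
    (hindep : iIndepFun X ℙ)
    (q : ℝ) (hq : 1 ≤ q) (hint : ∀ i, Integrable (fun ω => X i ω ^ q)) :
    ∫ ω, (1 + ∑ i, X i ω) ^ q ≤ ∏ i, ∫ ω, (1 + X i ω) ^ q := by
  classical
  have hq0 : 0 ≤ q := le_trans zero_le_one hq
  have hXnn : ∀ i ω, (0:ℝ) ≤ X i ω := fun i ω => hnonneg i ω
  have hcont : Measurable (fun x : ℝ => x ^ q) :=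
    (Real.continuous_rpow_const hq0).measurable
  set Y : Fin n → Ω → ℝ := fun i ω => (1 + X i ω) ^ q with hY
  have hYmeas : ∀ i, Measurable (Y i) := fun i =>
    hcont.comp (measurable_const.add (hmeas i))
  have hYnn : ∀ i ω, (0:ℝ) ≤ Y i ω := fun i ω =>
    Real.rpow_nonneg (by have := hXnn i ω; linarith) q
  have hYindep : iIndepFun Y ℙ :=
    hindep.comp (fun _ => fun x : ℝ => (1 + x) ^ q)
      (fun _ => hcont.comp (measurable_const.add measurable_id))
  -- integrability of each Y i
  have hYint : ∀ i, Integrable (Y i) := by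
    intro i
    have hbound : Integrable (fun ω => 2 ^ q * (1 + X i ω ^ q)) :=
      ((integrable_const (1 : ℝ)).add (hint i)).const_mul _
    refine hbound.mono (hYmeas i).aestronglyMeasurable (ae_of_all _ fun ω => ?_)
    have hx : 0 ≤ X i ω := hXnn i ω
    have h1 : (1 : ℝ) + X i ω ≤ 2 * max 1 (X i ω) := by
      rcases le_total (X i ω) 1 with h | h
      · rw [max_eq_left h]; linarith
      · rw [max_eq_right h]; linarith
    have h2 : Y i ω ≤ (2 * max 1 (X i ω)) ^ q :=
      Real.rpow_le_rpow (by linarith) h1 hq0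
    have h3 : (2 * max 1 (X i ω)) ^ q = 2 ^ q * (max 1 (X i ω)) ^ q :=
      Real.mul_rpow (by norm_num) (le_max_of_le_left zero_le_one)
    have h4 : (max 1 (X i ω)) ^ q ≤ 1 + X i ω ^ q := by
      rcases le_total (X i ω) 1 with h | h
      · rw [max_eq_left h, Real.one_rpow]
        have := Real.rpow_nonneg hx q
        linarith
      · rw [max_eq_right h]
        have := Real.one_le_rpow h hq0
        linarith
    have h2q : (0:ℝ) ≤ 2 ^ q := Real.rpow_nonneg (by norm_num) q
    have hYb : Y i ω ≤ 2 ^ q * (1 + X i ω ^ q) := by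
      calc Y i ω ≤ (2 * max 1 (X i ω)) ^ q := h2
        _ = 2 ^ q * (max 1 (X i ω)) ^ q := h3
        _ ≤ 2 ^ q * (1 + X i ω ^ q) := mul_le_mul_of_nonneg_left h4 h2q
    have hY0 : 0 ≤ Y i ω := hYnn i ω
    rw [Real.norm_eq_abs, Real.norm_eq_abs, abs_of_nonneg hY0,
      abs_of_nonneg (le_trans hY0 hYb)]
    exact hYb
  -- product integrability and integral of product
  have key : ∀ s : Finset (Fin n),
      Integrable (∏ i ∈ s, Y i) ∧
        integral ℙ (∏ i ∈ s, Y i) = ∏ i ∈ s, ∫ ω, Y i ω := by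
    intro s
    induction s using Finset.induction_on with
    | empty =>
      constructor
      · simp only [Finset.prod_empty]; exact integrable_const (1:ℝ)
      · simp only [Finset.prod_empty]
        rw [show (1 : Ω → ℝ) = fun _ => (1:ℝ) from rfl, integral_const]
        simp
    | insert a s hi ih =>
      have hindep' : IndepFun (Y a) (∏ j ∈ s, Y j) ℙ :=
        (hYindep.indepFun_finsetProd_of_notMem hYmeas hi).symm
      have hPnn : 0 ≤ (∏ j ∈ s, Y j) := fun ω => by
        rw [Finset.prod_apply]
        exact Finset.prod_nonneg fun j _ => hYnn j ω
      have hYann : 0 ≤ Y a := fun ω => hYnn a ω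
      have h1 : integral ℙ (Y a * ∏ j ∈ s, Y j)
          = integral ℙ (Y a) * integral ℙ (∏ j ∈ s, Y j) :=
        hindep'.integral_mul_eq_mul_integral
          (hYmeas a).aestronglyMeasurable
          (by rw [Finset.prod_fn]
              exact (Finset.measurable_prod s fun j _ => hYmeas j).aestronglyMeasurable)
      constructor
      · rw [Finset.prod_insert hi]
        exact hindep'.integrable_mul (hYint a) ih.1
      · rw [Finset.prod_insert hi, Finset.prod_insert hi, h1, ih.2]
  obtain ⟨hPint, hPeq⟩ := key Finset.univ
  have hmono : ∫ ω, (1 + ∑ i, X i ω) ^ q ≤ integral ℙ (∏ i, Y i) := by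
    refine integral_mono_of_nonneg (ae_of_all _ fun ω => ?_) hPint
      (ae_of_all _ fun ω => ?_)
    · exact Real.rpow_nonneg
        (add_nonneg zero_le_one (Finset.sum_nonneg fun i _ => hXnn i ω)) q
    · show (1 + ∑ i, X i ω) ^ q ≤ (∏ i, Y i) ω
      have hsum : 1 + ∑ i, X i ω ≤ ∏ i, (1 + X i ω) :=
        one_add_sum_le_prod_one_add' Finset.univ (fun i => X i ω)
          (fun i _ => hXnn i ω)
      have h0 : 0 ≤ 1 + ∑ i, X i ω :=
        add_nonneg zero_le_one (Finset.sum_nonneg fun i _ => hXnn i ω)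
      calc (1 + ∑ i, X i ω) ^ q ≤ (∏ i, (1 + X i ω)) ^ q :=
            Real.rpow_le_rpow h0 hsum hq0
        _ = ∏ i, (1 + X i ω) ^ q :=
            (Real.finset_prod_rpow Finset.univ _
              (fun i _ => by have := hXnn i ω; linarith) q).symm
        _ = (∏ i, Y i) ω := by rw [Finset.prod_apply]
  calc ∫ ω, (1 + ∑ i, X i ω) ^ q ≤ integral ℙ (∏ i, Y i) := hmono
    _ = ∏ i, ∫ ω, Y i ω := hPeq
    _ = ∏ i, ∫ ω, (1 + X i ω) ^ q := rfl
end
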